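/- Let H be a real Hilbert space, n ∈ ℕ, and φ₀, φ₁, …, φ_n ∈ H with φ₀ ≠ 0. Let ℓ : (Fin n → ℝ) → ℝ be convex, continuous, and nonnegative; let ρ : ℝ → ℝ be strictly increasing and strictly convex on [0,∞); let λ > 0 and let δ̲ ≤ δ̄ be real numbers. Define C := { g ∈ H : ⟪φ₀, g⟫ ∈ [δ̲, δ̄] } and J(g) := ℓ(fun i => ⟪φ_{i+1}, g⟫) + λ · ρ(‖g‖). Then there exists a unique g* ∈ C such that J(g*) ≤ J(g) for all g ∈ C, and moreover g* lies in the linear span of {φ₀, φ₁, …, φ_n}. -/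

import Mathlib

open scoped RealInnerProductSpace


/-- A monotone function convex on `[0,∞)` gives a continuous composition with the norm. -/
lemma rho_norm_continuous {H : Type*} [NormedAddCommGroup H] [InnerProductSpace ℝ H]
    (ρ : ℝ → ℝ) (hρmono : Monotone ρ) (hρconv : ConvexOn ℝ (Set.Ici 0) ρ) :
    Continuous (fun g : H => ρ ‖g‖) := by
  rw [continuous_iff_continuousAt]
  intro g
  by_cases hg : g = 0
  · subst hg
    rw [Metric.continuousAt_iff]
    intro ε hε
    have hρ10 : 0 ≤ ρ 1 - ρ 0 := by have := hρmono (by norm_num : (0:ℝ) ≤ 1); linarith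
    refine ⟨min 1 (ε / (ρ 1 - ρ 0 + 1)), ?_, ?_⟩
    · exact lt_min one_pos (div_pos hε (by linarith))
    · intro x hx
      rw [dist_zero_right] at hx
      have hx1 : ‖x‖ ≤ 1 := le_of_lt (lt_of_lt_of_le hx (min_le_left _ _))
      have hx2 : ‖x‖ < ε / (ρ 1 - ρ 0 + 1) := lt_of_lt_of_le hx (min_le_right _ _)
      have h1 : ρ ‖x‖ ≤ (1 - ‖x‖) * ρ 0 + ‖x‖ * ρ 1 := by
        have := hρconv.2 (Set.mem_Ici.2 le_rfl) (Set.mem_Ici.2 (by norm_num : (0:ℝ) ≤ 1))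
          (show (0:ℝ) ≤ 1 - ‖x‖ by linarith) (show (0:ℝ) ≤ ‖x‖ from norm_nonneg x) (by ring)
        simpa using this
      have h2 : ρ 0 ≤ ρ ‖x‖ := hρmono (norm_nonneg x)
      rw [norm_zero, Real.dist_eq, abs_lt]
      constructor
      · nlinarith
      · have : ρ ‖x‖ - ρ 0 ≤ ‖x‖ * (ρ 1 - ρ 0) := by nlinarith
        have h3 : ‖x‖ * (ρ 1 - ρ 0) < ε := by
          calc ‖x‖ * (ρ 1 - ρ 0) ≤ ‖x‖ * (ρ 1 - ρ 0 + 1) := by nlinarith [norm_nonneg x]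
          _ < ε / (ρ 1 - ρ 0 + 1) * (ρ 1 - ρ 0 + 1) := by
              apply mul_lt_mul_of_pos_right hx2; linarith
          _ = ε := by field_simp
        linarith
  · have hn : (0:ℝ) < ‖g‖ := norm_pos_iff.2 hg
    have hcont : ContinuousAt ρ ‖g‖ := by
      have h1 : ContinuousOn ρ (interior (Set.Ici (0:ℝ))) := hρconv.continuousOn_interior
      rw [interior_Ici] at h1
      exact h1.continuousAt (Ioi_mem_nhds hn)
    exact hcont.comp continuous_norm.continuousAt

lemma rho_norm_strict_mid {H : Type*} [NormedAddCommGroup H] [InnerProductSpace ℝ H]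
    (ρ : ℝ → ℝ) (hρmono : StrictMono ρ) (hρconv : StrictConvexOn ℝ (Set.Ici 0) ρ)
    {x y : H} (hxy : x ≠ y) :
    ρ ‖(1/2 : ℝ) • x + (1/2 : ℝ) • y‖ < (ρ ‖x‖ + ρ ‖y‖) / 2 := by
  have hle : ‖(1/2:ℝ) • x + (1/2:ℝ) • y‖ ≤ (1/2) * ‖x‖ + (1/2) * ‖y‖ := by
    calc ‖(1/2:ℝ) • x + (1/2:ℝ) • y‖ ≤ ‖(1/2:ℝ) • x‖ + ‖(1/2:ℝ) • y‖ := norm_add_le _ _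
    _ = (1/2) * ‖x‖ + (1/2) * ‖y‖ := by rw [norm_smul, norm_smul]; norm_num
  by_cases h : ‖x‖ = ‖y‖
  · have hu : ‖(1/2:ℝ) • x + (1/2:ℝ) • y‖ < ‖x‖ :=
      norm_combo_lt_of_ne le_rfl (le_of_eq h.symm) hxy (by norm_num) (by norm_num) (by norm_num)
    have h2 := hρmono hu
    rw [← h]
    linarith
  · have hv := hρconv.2 (Set.mem_Ici.2 (norm_nonneg x)) (Set.mem_Ici.2 (norm_nonneg y)) h
      (show (0:ℝ) < 1/2 by norm_num) (show (0:ℝ) < 1/2 by norm_num) (by norm_num)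
    simp only [smul_eq_mul] at hv
    have h2 := hρmono.monotone hle
    linarith

lemma rho_unbounded (ρ : ℝ → ℝ) (hρmono : StrictMono ρ)
    (hρconv : StrictConvexOn ℝ (Set.Ici 0) ρ) (M : ℝ) :
    ∃ R : ℝ, 2 ≤ R ∧ ∀ r : ℝ, R < r → M < ρ r := by
  set s := ρ 2 - ρ 1 with hs
  have hs0 : 0 < s := sub_pos.2 (hρmono one_lt_two)
  refine ⟨max 2 (1 + (M - ρ 1) / s), le_max_left _ _, ?_⟩
  intro r hr
  have hr2 : 2 < r := lt_of_le_of_lt (le_max_left _ _) hr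
  have hr1 : (0:ℝ) < r - 1 := by linarith
  have key : ρ 1 + (r - 1) * s ≤ ρ r := by
    have hcx := hρconv.convexOn.2 (Set.mem_Ici.2 (by norm_num : (0:ℝ) ≤ 1))
      (Set.mem_Ici.2 (by linarith : (0:ℝ) ≤ r))
      (show (0:ℝ) ≤ (r-2)/(r-1) from div_nonneg (by linarith) (by linarith))
      (show (0:ℝ) ≤ 1/(r-1) from by positivity)
      (show (r-2)/(r-1) + 1/(r-1) = 1 by field_simp; ring)
    have hcomb : ((r-2)/(r-1)) • (1:ℝ) + (1/(r-1)) • r = 2 := by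
      rw [smul_eq_mul, smul_eq_mul]
      field_simp
      ring
    rw [hcomb] at hcx
    simp only [smul_eq_mul] at hcx
    have hcx' := mul_le_mul_of_nonneg_left hcx (le_of_lt hr1)
    rw [mul_add] at hcx'
    rw [show (r-1) * ((r-2)/(r-1) * ρ 1) = (r-2) * ρ 1 by field_simp,
        show (r-1) * (1/(r-1) * ρ r) = ρ r by field_simp] at hcx'
    rw [hs]
    nlinarith
  have h3 : 1 + (M - ρ 1) / s < r := lt_of_le_of_lt (le_max_right _ _) hr
  have h4 : (M - ρ 1) / s < r - 1 := by linarith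
  have h5 : M - ρ 1 < (r - 1) * s := (div_lt_iff₀ hs0).1 h4
  linarith


theorem constrained_estimation_unique_solution
    {H : Type*} [NormedAddCommGroup H] [InnerProductSpace ℝ H] [CompleteSpace H]
    (n : ℕ) (φ : Fin (n + 1) → H) (hφ0 : φ 0 ≠ 0)
    (ℓ : (Fin n → ℝ) → ℝ)
    (hℓconv : ConvexOn ℝ Set.univ ℓ) (hℓcont : Continuous ℓ)
    (hℓnn : ∀ v : Fin n → ℝ, 0 ≤ ℓ v)
    (ρ : ℝ → ℝ) (hρmono : StrictMono ρ) (hρconv : StrictConvexOn ℝ (Set.Ici 0) ρ)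
    (lam : ℝ) (hlam : 0 < lam)
    (δlo δhi : ℝ) (hδ : δlo ≤ δhi)
    (C : Set H) (hC : C = {g : H | ⟪φ 0, g⟫ ∈ Set.Icc δlo δhi})
    (J : H → ℝ)
    (hJ : ∀ g : H, J g = ℓ (fun i : Fin n => ⟪φ i.succ, g⟫) + lam * ρ ‖g‖) :
    ∃ gs : H,
      (gs ∈ C ∧ (∀ g ∈ C, J gs ≤ J g) ∧ gs ∈ Submodule.span ℝ (Set.range φ)) ∧
      (∀ g' : H, g' ∈ C → (∀ g ∈ C, J g' ≤ J g) → g' = gs) := by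
  subst hC
  set V := Submodule.span ℝ (Set.range φ) with hV
  haveI : FiniteDimensional ℝ V := FiniteDimensional.span_of_finite ℝ (Set.finite_range φ)
  have hφV : ∀ i, φ i ∈ V := fun i => Submodule.subset_span ⟨i, rfl⟩
  have hρcont : Continuous (fun g : H => ρ ‖g‖) :=
    rho_norm_continuous ρ hρmono.monotone hρconv.convexOn
  have hJcont : Continuous J := by
    have hJfun : J = fun g => ℓ (fun i : Fin n => ⟪φ i.succ, g⟫) + lam * ρ ‖g‖ := funext hJ
    rw [hJfun]
    exact (hℓcont.comp (continuous_pi fun i =>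
      (continuous_const.inner continuous_id))).add (continuous_const.mul hρcont)
  -- projection facts
  have hPinner : ∀ (i : Fin (n+1)) (g : H),
      ⟪φ i, ((Submodule.orthogonalProjectionOnto V g : V) : H)⟫ = ⟪φ i, g⟫ := by
    intro i g
    have h := Submodule.inner_orthogonalProjectionOnto_eq_of_mem_left (𝕜 := ℝ) (K := V) ⟨φ i, hφV i⟩ g
    simpa only [Submodule.coe_inner] using h
  have hPnorm : ∀ g : H, ‖((Submodule.orthogonalProjectionOnto V g : V) : H)‖ ≤ ‖g‖ := by
    intro g
    have h := (Submodule.orthogonalProjectionOnto V).le_opNorm g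
    have h2 : ‖Submodule.orthogonalProjectionOnto V‖ * ‖g‖ ≤ 1 * ‖g‖ :=
      mul_le_mul_of_nonneg_right (Submodule.orthogonalProjectionOnto_norm_le V) (norm_nonneg g)
    calc ‖((Submodule.orthogonalProjectionOnto V g : V) : H)‖ = ‖Submodule.orthogonalProjectionOnto V g‖ := rfl
      _ ≤ ‖Submodule.orthogonalProjectionOnto V‖ * ‖g‖ := h
      _ ≤ 1 * ‖g‖ := h2
      _ = ‖g‖ := one_mul _
  -- base point
  have hφ0n : (0:ℝ) < ‖φ 0‖ := norm_pos_iff.2 hφ0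
  set g₀ : H := (δlo / ‖φ 0‖ ^ 2) • φ 0 with hg₀
  have hinner₀ : ⟪φ 0, g₀⟫ = δlo := by
    rw [hg₀, real_inner_smul_right, real_inner_self_eq_norm_sq]
    field_simp
  have hg₀C : g₀ ∈ {g : H | ⟪φ 0, g⟫ ∈ Set.Icc δlo δhi} := by
    simp only [Set.mem_setOf_eq, hinner₀, Set.mem_Icc]
    exact ⟨le_rfl, hδ⟩
  have hg₀V : g₀ ∈ V := Submodule.smul_mem _ _ (hφV 0)
  -- coercivity radius
  obtain ⟨R₀, hR₀2, hR₀⟩ := rho_unbounded ρ hρmono hρconv (J g₀ / lam)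
  set R : ℝ := max R₀ ‖g₀‖ with hRdef
  have hRbig : ∀ r : ℝ, R < r → J g₀ < lam * ρ r := by
    intro r hr
    have := hR₀ r (lt_of_le_of_lt (le_max_left _ _) hr)
    rw [div_lt_iff₀ hlam] at this
    linarith
  -- the compact set
  set D : Set H :=
    (V : Set H) ∩ ({g : H | ⟪φ 0, g⟫ ∈ Set.Icc δlo δhi} ∩ Metric.closedBall 0 R) with hD
  have hCclosed : IsClosed {g : H | ⟪φ 0, g⟫ ∈ Set.Icc δlo δhi} :=
    IsClosed.preimage (continuous_const.inner continuous_id) isClosed_Icc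
  have hDclosed : IsClosed D :=
    (Submodule.closed_of_finiteDimensional V).inter
      (hCclosed.inter Metric.isClosed_closedBall)
  have hDsub : D ⊆ (V : Set H) := Set.inter_subset_left
  have hDcomp : IsCompact D := by
    have hpre : IsCompact ((↑) ⁻¹' D : Set V) := by
      apply Metric.isCompact_of_isClosed_isBounded
      · exact hDclosed.preimage continuous_subtype_val
      · refine Metric.isBounded_closedBall.subset (?_ : _ ⊆ Metric.closedBall (0 : V) R)
        intro v hv
        obtain ⟨-, -, hb⟩ := hv
        simp only [Metric.mem_closedBall, dist_zero_right] at hb ⊢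
        exact hb
    have himg : D = (↑) '' ((↑) ⁻¹' D : Set V) := by
      rw [Set.image_preimage_eq_inter_range, Subtype.range_coe]
      exact (Set.inter_eq_left.2 hDsub).symm
    rw [himg]
    exact hpre.image continuous_subtype_val
  have hg₀D : g₀ ∈ D := by
    refine ⟨hg₀V, hg₀C, ?_⟩
    simp only [Metric.mem_closedBall, dist_zero_right]
    exact le_max_right _ _
  obtain ⟨gs, hgsD, hgsmin'⟩ := hDcomp.exists_isMinOn ⟨g₀, hg₀D⟩ hJcont.continuousOn
  have hgsmin : ∀ g ∈ D, J gs ≤ J g := fun g hg => hgsmin' hg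
  obtain ⟨hgsV, hgsC, hgsR⟩ := hgsD
  -- global minimality over C
  have hmin : ∀ g ∈ {g : H | ⟪φ 0, g⟫ ∈ Set.Icc δlo δhi}, J gs ≤ J g := by
    intro g hg
    set p : H := ((Submodule.orthogonalProjectionOnto V g : V) : H) with hp
    have hpV : p ∈ V := (Submodule.orthogonalProjectionOnto V g).2
    have hpC : p ∈ {g : H | ⟪φ 0, g⟫ ∈ Set.Icc δlo δhi} := by
      simpa only [Set.mem_setOf_eq, hp, hPinner 0 g] using hg
    have hℓeq : (fun i : Fin n => ⟪φ i.succ, p⟫) = fun i : Fin n => ⟪φ i.succ, g⟫ :=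
      funext fun i => hPinner i.succ g
    have hJp : J p ≤ J g := by
      rw [hJ p, hJ g, hℓeq]
      have h1 := hρmono.monotone (hPnorm g)
      have h2 := mul_le_mul_of_nonneg_left h1 (le_of_lt hlam)
      linarith
    by_cases hpR : ‖p‖ ≤ R
    · refine le_trans (hgsmin p ⟨hpV, hpC, ?_⟩) hJp
      simpa only [Metric.mem_closedBall, dist_zero_right] using hpR
    · push_neg at hpR
      have h1 : J g₀ < lam * ρ ‖p‖ := hRbig ‖p‖ hpR
      have h2 : lam * ρ ‖p‖ ≤ J p := by
        rw [hJ p]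
        linarith [hℓnn (fun i : Fin n => ⟪φ i.succ, p⟫)]
      have h3 : J gs ≤ J g₀ := hgsmin g₀ hg₀D
      linarith
  refine ⟨gs, ⟨hgsC, hmin, hgsV⟩, ?_⟩
  -- uniqueness
  intro g' hg'C hg'min
  by_contra hne
  set z : H := (1/2 : ℝ) • g' + (1/2 : ℝ) • gs with hz
  have hzC : z ∈ {g : H | ⟪φ 0, g⟫ ∈ Set.Icc δlo δhi} := by
    simp only [Set.mem_setOf_eq, Set.mem_Icc] at hg'C hgsC ⊢
    rw [hz, inner_add_right, real_inner_smul_right, real_inner_smul_right]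
    constructor <;> [linarith [hg'C.1, hgsC.1]; linarith [hg'C.2, hgsC.2]]
  have hρlt : ρ ‖z‖ < (ρ ‖g'‖ + ρ ‖gs‖) / 2 := rho_norm_strict_mid ρ hρmono hρconv hne
  have hℓle : ℓ (fun i : Fin n => ⟪φ i.succ, z⟫) ≤
      (ℓ (fun i : Fin n => ⟪φ i.succ, g'⟫) + ℓ (fun i : Fin n => ⟪φ i.succ, gs⟫)) / 2 := by
    have hcv := hℓconv.2 (Set.mem_univ (fun i : Fin n => ⟪φ i.succ, g'⟫))
      (Set.mem_univ (fun i : Fin n => ⟪φ i.succ, gs⟫))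
      (show (0:ℝ) ≤ 1/2 by norm_num) (show (0:ℝ) ≤ 1/2 by norm_num) (by norm_num)
    have harg : (fun i : Fin n => ⟪φ i.succ, z⟫) =
        (1/2 : ℝ) • (fun i : Fin n => ⟪φ i.succ, g'⟫) +
        (1/2 : ℝ) • (fun i : Fin n => ⟪φ i.succ, gs⟫) := by
      funext i
      simp only [hz, inner_add_right, real_inner_smul_right, Pi.add_apply, Pi.smul_apply,
        smul_eq_mul]
    rw [harg]
    simp only [smul_eq_mul] at hcv
    linarith
  have hJz : J z < (J g' + J gs) / 2 := by
    rw [hJ z, hJ g', hJ gs]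
    have := mul_lt_mul_of_pos_left hρlt hlam
    linarith
  have he1 : J gs ≤ J g' := hmin g' hg'C
  have he2 : J g' ≤ J gs := hg'min gs hgsC
  have he3 : J gs ≤ J z := hmin z hzC
  linarith
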